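/- arXiv:2110.04420 — 3 statements merged into one kernel-verified Lean document; each statement's English description precedes it below -/
import Mathlib

section
/- For a linear displacement field u(x) = A x + b with a constant 3×3 matrix A, the linearized LPS operator vanishes: 𝓛_LPS[u](x) = 0 for all x. (Linear patch test consistency at the continuum level.) -/
open MeasureTheory

local notation "E3" => EuclideanSpace ℝ (Fin 3)

/-- The linearized nonlocal dilatation. -/
noncomputable def nlDilatation (δ : ℝ) (κ : ℝ → ℝ) (m : ℝ) (u : E3 → E3) (x : E3) : ℝ :=
  (3 / m) * ∫ ζ in Metric.ball (0 : E3) δ, κ ‖ζ‖ * (inner ℝ ζ (u (x + ζ) - u x) : ℝ)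

/-- The linearized LPS (linear peridynamic solid) operator; note that
`(ξ ⊗ ξ / |ξ|²) v = (ξ·v / |ξ|²) ξ`. -/
noncomputable def LPS (δ : ℝ) (κ : ℝ → ℝ) (m K G : ℝ) (u : E3 → E3) (x : E3) : E3 :=
  ∫ ξ in Metric.ball (0 : E3) δ,
    (κ ‖ξ‖ / m) •
      (((3 * K - 5 * G) * (nlDilatation δ κ m u x + nlDilatation δ κ m u (x + ξ))) • ξ +
        ((30 * G / ‖ξ‖ ^ 2) * (inner ℝ ξ (u (x + ξ) - u x) : ℝ)) • ξ)

/-- An odd function integrates to zero over a ball centered at the origin. -/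
lemma integral_ball_odd_eq_zero (δ : ℝ) (f : E3 → E3) (hf : ∀ ξ, f (-ξ) = - f ξ) :
    (∫ ξ in Metric.ball (0 : E3) δ, f ξ) = 0 := by
  set s : Set E3 := Metric.ball (0 : E3) δ
  have hs : MeasurableSet s := measurableSet_ball
  have hI : (∫ ξ in s, f ξ) = ∫ ξ, s.indicator f ξ := (integral_indicator hs).symm
  have hind : ∀ ξ, s.indicator f (-ξ) = - s.indicator f ξ := by
    intro ξ
    have hmem : -ξ ∈ s ↔ ξ ∈ s := by
      simp [s, Metric.mem_ball, dist_eq_norm]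
    by_cases h : ξ ∈ s
    · rw [Set.indicator_of_mem (hmem.mpr h), Set.indicator_of_mem h, hf]
    · rw [Set.indicator_of_notMem (fun hc => h (hmem.mp hc)), Set.indicator_of_notMem h,
        neg_zero]
  have key : (∫ ξ, s.indicator f ξ) = - ∫ ξ, s.indicator f ξ := by
    conv_lhs => rw [← integral_neg_eq_self (fun ξ => s.indicator f ξ) volume]
    simp only [hind]
    rw [integral_neg]
  have h2 : (∫ ξ, s.indicator f ξ) = 0 := by
    have := key
    have h : (∫ ξ, s.indicator f ξ) + (∫ ξ, s.indicator f ξ) = 0 := by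
      nth_rewrite 1 [key]; simp
    have h2 : (2 : ℝ) • (∫ ξ, s.indicator f ξ) = 0 := by
      rw [two_smul]; exact h
    simpa using (smul_eq_zero.mp h2).resolve_left (by norm_num)
  rw [hI, h2]

/-- Linear patch test consistency at the continuum level: the linearized LPS
operator vanishes on linear displacement fields `u x = A x + b`. -/
theorem LPS_of_linear (δ : ℝ) (hδ : 0 < δ) (κ : ℝ → ℝ) (hκ : ∀ r, 0 ≤ κ r)
    (m : ℝ) (hm : m = ∫ ζ in Metric.ball (0 : E3) δ, κ ‖ζ‖ * ‖ζ‖ ^ 2) (hm_pos : 0 < m)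
    (K G : ℝ) (hK : 0 < K) (hG : 0 < G)
    (A : E3 →ₗ[ℝ] E3) (b : E3) (u : E3 → E3) (hu : ∀ x, u x = A x + b) :
    ∀ x, LPS δ κ m K G u x = 0 := by
  have hsub : ∀ y ζ : E3, u (y + ζ) - u y = A ζ := by
    intro y ζ; simp [hu, map_add]
  intro x
  have hθ : ∀ y : E3, nlDilatation δ κ m u y = nlDilatation δ κ m u x := by
    intro y; unfold nlDilatation; simp only [hsub]
  set θ : ℝ := nlDilatation δ κ m u x with hθdef
  have hLPS : LPS δ κ m K G u x =
      ∫ ξ in Metric.ball (0 : E3) δ,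
        (κ ‖ξ‖ / m) • (((3 * K - 5 * G) * (θ + θ)) • ξ +
          ((30 * G / ‖ξ‖ ^ 2) * (inner ℝ ξ (A ξ) : ℝ)) • ξ) := by
    unfold LPS
    simp only [hsub, hθ]
  rw [hLPS]
  apply integral_ball_odd_eq_zero
  intro ξ
  have h1 : (inner ℝ (-ξ) (A (-ξ)) : ℝ) = inner ℝ ξ (A ξ) := by
    rw [map_neg, inner_neg_neg]
  rw [norm_neg, h1]
  rw [smul_neg, smul_neg, ← neg_add, smul_neg]
end

section
/- For a quadratic displacement field of the form u(x) = (x₁², 0, 0), the linearized nonlocal dilatation satisfies θ(x) = 2x₁ = ∇·u(x) for every x, independently of the horizon δ and the radial influence function κ. -/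
open MeasureTheory

local notation "E3" => EuclideanSpace ℝ (Fin 3)

private lemma coord_abs_le_norm (ζ : E3) (i : Fin 3) : |ζ i| ≤ ‖ζ‖ := by
  rw [EuclideanSpace.norm_eq]
  have h1 : |ζ i| = Real.sqrt (‖ζ i‖ ^ 2) := by
    rw [Real.sqrt_sq_eq_abs]; simp
  rw [h1]
  exact Real.sqrt_le_sqrt
    (Finset.single_le_sum (fun j _ => sq_nonneg ‖ζ j‖) (Finset.mem_univ i))

private lemma normsq_eq (ζ : E3) : ‖ζ‖ ^ 2 = (ζ 0) ^ 2 + (ζ 1) ^ 2 + (ζ 2) ^ 2 := by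
  rw [EuclideanSpace.norm_eq, Real.sq_sqrt (by positivity)]
  simp [Fin.sum_univ_three, Real.norm_eq_abs, sq_abs]

private lemma setIntegral_isometry (e : E3 ≃ₗᵢ[ℝ] E3) (δ : ℝ) (f : E3 → ℝ) :
    ∫ ζ in Metric.ball (0 : E3) δ, f (e ζ) = ∫ ζ in Metric.ball (0 : E3) δ, f ζ := by
  have hpre : (⇑e) ⁻¹' Metric.ball (0 : E3) δ = Metric.ball (0 : E3) δ := by
    ext ζ
    simp [Metric.mem_ball, dist_zero_right, e.norm_map]
  have hemb : MeasurableEmbedding (⇑e) := e.toHomeomorph.measurableEmbedding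
  have := e.measurePreserving.setIntegral_preimage_emb hemb f (Metric.ball (0 : E3) δ)
  rwa [hpre] at this

/-- For the quadratic displacement field `u x = (x₁², 0, 0)`, the linearized
nonlocal dilatation equals `2 x₁ = ∇·u(x)` everywhere, for any horizon `δ` and
any nonnegative integrable radial influence function `κ`. -/
theorem dilatation_of_quadratic_field (δ : ℝ) (hδ : 0 < δ) (κ : ℝ → ℝ)
    (hκ : ∀ r, 0 ≤ κ r)
    (hint : IntegrableOn (fun ζ : E3 => κ ‖ζ‖ * ‖ζ‖ ^ 2) (Metric.ball (0 : E3) δ))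
    (m : ℝ) (hm : m = ∫ ζ in Metric.ball (0 : E3) δ, κ ‖ζ‖ * ‖ζ‖ ^ 2) (hm_pos : 0 < m)
    (u : E3 → E3) (hu : ∀ x, u x = (x 0) ^ 2 • EuclideanSpace.single (0 : Fin 3) (1 : ℝ)) :
    ∀ x, nlDilatation δ κ m u x = 2 * x 0 := by
  intro x
  set S := Metric.ball (0 : E3) δ with hS
  have hSm : MeasurableSet S := measurableSet_ball
  set g : E3 → ℝ := fun ζ => κ ‖ζ‖ * ‖ζ‖ ^ 2 with hg
  set F : Fin 3 → E3 → ℝ := fun i ζ => κ ‖ζ‖ * (ζ i) ^ 2 with hF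
  -- measurability of coordinate quotient functions
  have hcoord_meas : ∀ i : Fin 3, Measurable fun ζ : E3 => ζ i := by
    intro i
    exact (EuclideanSpace.proj i : E3 →L[ℝ] ℝ).continuous.measurable
  -- F i = g * bounded measurable function (everywhere)
  have hFg : ∀ (i : Fin 3) (ζ : E3), F i ζ = g ζ * ((ζ i) ^ 2 / ‖ζ‖ ^ 2) := by
    intro i ζ
    by_cases h : ζ = 0
    · simp [h, hF, hg]
    · have hn : ‖ζ‖ ≠ 0 := norm_ne_zero_iff.2 h
      field_simp [hF, hg]
      ring
  have hF3g : ∀ ζ : E3, κ ‖ζ‖ * (ζ 0) ^ 3 = g ζ * ((ζ 0) ^ 3 / ‖ζ‖ ^ 2) := by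
    intro ζ
    by_cases h : ζ = 0
    · simp [h, hg]
    · have hn : ‖ζ‖ ≠ 0 := norm_ne_zero_iff.2 h
      field_simp [hg]
      ring
  have hmeasF : ∀ i : Fin 3, AEStronglyMeasurable (F i) (volume.restrict S) := by
    intro i
    have : F i = fun ζ => g ζ * ((ζ i) ^ 2 / ‖ζ‖ ^ 2) := funext (hFg i)
    rw [this]
    exact hint.aestronglyMeasurable.mul
      (((hcoord_meas i).pow_const 2).div
        (measurable_norm.pow_const 2)).aestronglyMeasurable
  have hmeasO : AEStronglyMeasurable (fun ζ : E3 => κ ‖ζ‖ * (ζ 0) ^ 3)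
      (volume.restrict S) := by
    have : (fun ζ : E3 => κ ‖ζ‖ * (ζ 0) ^ 3)
        = fun ζ => g ζ * ((ζ 0) ^ 3 / ‖ζ‖ ^ 2) := funext hF3g
    rw [this]
    exact hint.aestronglyMeasurable.mul
      (((hcoord_meas 0).pow_const 3).div
        (measurable_norm.pow_const 2)).aestronglyMeasurable
  -- integrability
  have hintF : ∀ i : Fin 3, IntegrableOn (F i) S := by
    intro i
    refine Integrable.mono' hint (hmeasF i) (ae_of_all _ fun ζ => ?_)
    have h2 : (ζ i) ^ 2 ≤ ‖ζ‖ ^ 2 := by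
      rw [← sq_abs]
      exact pow_le_pow_left₀ (abs_nonneg _) (coord_abs_le_norm ζ i) 2
    have h3 := mul_le_mul_of_nonneg_left h2 (hκ ‖ζ‖)
    have h4 : 0 ≤ κ ‖ζ‖ * (ζ i) ^ 2 := mul_nonneg (hκ _) (sq_nonneg _)
    simpa [hF, hg, Real.norm_eq_abs, abs_of_nonneg h4, abs_of_nonneg (hκ ‖ζ‖)] using h3
  have hintO : IntegrableOn (fun ζ : E3 => κ ‖ζ‖ * (ζ 0) ^ 3) S := by
    refine Integrable.mono' (hint.const_mul δ) hmeasO ?_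
    rw [ae_restrict_iff' hSm]
    refine ae_of_all _ fun ζ hζ => ?_
    have hlt : ‖ζ‖ < δ := by
      simpa [hS, Metric.mem_ball, dist_zero_right] using hζ
    have habs : |ζ 0| ≤ ‖ζ‖ := coord_abs_le_norm ζ 0
    have h3 : |ζ 0| ^ 3 ≤ ‖ζ‖ ^ 3 := pow_le_pow_left₀ (abs_nonneg _) habs 3
    have h4 : ‖ζ‖ ^ 3 ≤ δ * ‖ζ‖ ^ 2 := by nlinarith [norm_nonneg ζ]
    have : ‖κ ‖ζ‖ * (ζ 0) ^ 3‖ = κ ‖ζ‖ * |ζ 0| ^ 3 := by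
      rw [Real.norm_eq_abs, abs_mul, abs_of_nonneg (hκ _), abs_pow]
    rw [this]
    calc κ ‖ζ‖ * |ζ 0| ^ 3 ≤ κ ‖ζ‖ * (δ * ‖ζ‖ ^ 2) := by
          exact mul_le_mul_of_nonneg_left (h3.trans h4) (hκ _)
      _ = δ * (κ ‖ζ‖ * ‖ζ‖ ^ 2) := by ring
  -- the odd term integrates to zero
  have hodd : (∫ ζ in S, κ ‖ζ‖ * (ζ 0) ^ 3) = 0 := by
    have hneg := setIntegral_isometry (LinearIsometryEquiv.neg ℝ) δ
      (fun ζ => κ ‖ζ‖ * (ζ 0) ^ 3)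
    have heq : ∀ ζ : E3,
        κ ‖((LinearIsometryEquiv.neg ℝ : E3 ≃ₗᵢ[ℝ] E3)) ζ‖ *
          ((((LinearIsometryEquiv.neg ℝ : E3 ≃ₗᵢ[ℝ] E3)) ζ : E3) 0) ^ 3
        = -(κ ‖ζ‖ * (ζ 0) ^ 3) := by
      intro ζ
      have h1 : ((LinearIsometryEquiv.neg ℝ : E3 ≃ₗᵢ[ℝ] E3)) ζ = -ζ := rfl
      have h2 : ((-ζ : E3)) 0 = -(ζ 0) := rfl
      rw [h1, h2, norm_neg]
      ring
    rw [show (fun ζ : E3 => κ ‖((LinearIsometryEquiv.neg ℝ : E3 ≃ₗᵢ[ℝ] E3)) ζ‖ *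
        ((((LinearIsometryEquiv.neg ℝ : E3 ≃ₗᵢ[ℝ] E3)) ζ : E3) 0) ^ 3)
        = fun ζ : E3 => -(κ ‖ζ‖ * (ζ 0) ^ 3) from funext heq] at hneg
    rw [integral_neg] at hneg
    linarith
  -- coordinate symmetry
  have hswap : ∀ i : Fin 3, (∫ ζ in S, F i ζ) = ∫ ζ in S, F 0 ζ := by
    intro i
    set e : E3 ≃ₗᵢ[ℝ] E3 :=
      LinearIsometryEquiv.piLpCongrLeft 2 ℝ ℝ (Equiv.swap (0 : Fin 3) i) with he
    have happ : ∀ ζ : E3, (e ζ : E3) 0 = ζ i := by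
      intro ζ
      rw [he]
      simp [LinearIsometryEquiv.piLpCongrLeft_apply]
    have hcomp : ∀ ζ : E3, F 0 (e ζ) = F i ζ := by
      intro ζ
      simp only [hF, e.norm_map, happ]
    have := setIntegral_isometry e δ (F 0)
    rw [show (fun ζ : E3 => F 0 (e ζ)) = F i from funext hcomp] at this
    exact this
  -- sum of the three coordinate integrals is m
  have hsum : (∫ ζ in S, F 0 ζ) = m / 3 := by
    have hgeq : g = fun ζ => F 0 ζ + F 1 ζ + F 2 ζ := by
      funext ζ
      simp only [hF, hg]
      rw [normsq_eq ζ]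
      ring
    have key : (∫ ζ in S, (F 0 ζ + F 1 ζ + F 2 ζ))
        = (∫ ζ in S, F 0 ζ) + (∫ ζ in S, F 1 ζ) + (∫ ζ in S, F 2 ζ) := by
      calc (∫ ζ in S, (F 0 ζ + F 1 ζ + F 2 ζ))
          = (∫ ζ in S, (F 0 ζ + F 1 ζ)) + ∫ ζ in S, F 2 ζ :=
            integral_add ((hintF 0).add (hintF 1)) (hintF 2)
        _ = ((∫ ζ in S, F 0 ζ) + ∫ ζ in S, F 1 ζ) + ∫ ζ in S, F 2 ζ :=
            congrArg (fun t => t + ∫ ζ in S, F 2 ζ) (integral_add (hintF 0) (hintF 1))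
    have hadd : (∫ ζ in S, F 0 ζ) + (∫ ζ in S, F 1 ζ) + (∫ ζ in S, F 2 ζ) = m := by
      rw [hm, hgeq]
      exact key.symm
    have h1 := hswap 1
    have h2 := hswap 2
    linarith
  -- rewrite the integrand
  have hrepr : ∀ ζ : E3, κ ‖ζ‖ * (inner ℝ ζ (u (x + ζ) - u x) : ℝ)
      = (2 * x 0) * F 0 ζ + κ ‖ζ‖ * (ζ 0) ^ 3 := by
    intro ζ
    rw [hu, hu, ← sub_smul, real_inner_smul_right]
    have hx0 : ((x + ζ : E3)) 0 = x 0 + ζ 0 := rfl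
    have hin : (inner ℝ ζ (EuclideanSpace.single (0 : Fin 3) (1 : ℝ)) : ℝ) = ζ 0 := by
      rw [EuclideanSpace.inner_single_right]
      simp
    rw [hin, hx0]
    simp only [hF]
    ring
  -- conclude
  rw [nlDilatation]
  rw [show (fun ζ : E3 => κ ‖ζ‖ * (inner ℝ ζ (u (x + ζ) - u x) : ℝ))
      = fun ζ : E3 => (2 * x 0) * F 0 ζ + κ ‖ζ‖ * (ζ 0) ^ 3 from funext hrepr]
  rw [integral_add ((hintF 0).const_mul _) hintO, integral_const_mul, hodd, hsum]
  field_simp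
  ring
end

section
/- Nonlocal Poincaré-type coercivity on a segment: if u : ℝ → ℝ is measurable, vanishes outside a bounded interval ω, and satisfies ∫∫_{|ξ|<δ} (u(x+ξ) − u(x))² dξ dx = 0, then u = 0 almost everywhere. Consequently, the LPS energy vanishing on a displacement extended by zero into the interaction layer forces the displacement to vanish. -/
open MeasureTheory

/-- Nonlocal Poincaré-type coercivity on a segment: if `u ∈ L²(ℝ)` vanishes
outside a bounded interval and its nonlocal energy
`∫∫_{|ξ|<δ} (u(x+ξ) − u(x))² dξ dx` vanishes, then `u = 0` almost everywhere. -/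
theorem nonlocal_poincare_segment (δ : ℝ) (hδ : 0 < δ)
    (u : ℝ → ℝ) (humeas : Measurable u) (huL2 : MemLp u 2 volume)
    (a b : ℝ) (hsupp : Function.support u ⊆ Set.Icc a b)
    (henergy : (∫ x : ℝ, ∫ ξ in Set.Ioo (-δ) δ, (u (x + ξ) - u x) ^ 2) = 0) :
    u =ᵐ[volume] 0 := by
  set ν := volume.restrict (Set.Ioo (-δ) δ) with hν
  have hmg2 : Measurable fun p : ℝ × ℝ => ENNReal.ofReal ((u (p.1 + p.2) - u p.1) ^ 2) :=
    (((humeas.comp (measurable_fst.add measurable_snd)).sub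
      (humeas.comp measurable_fst)).pow_const 2).ennreal_ofReal
  have hinner_meas : Measurable fun x : ℝ => ∫⁻ ξ, ENNReal.ofReal ((u (x + ξ) - u x) ^ 2) ∂ν :=
    Measurable.lintegral_prod_right (f := fun x ξ => ENNReal.ofReal ((u (x + ξ) - u x) ^ 2)) hmg2
  -- finiteness of the total lintegral
  have hfin : ∫⁻ x : ℝ, ∫⁻ ξ, ENNReal.ofReal ((u (x + ξ) - u x) ^ 2) ∂ν < ⊤ := by
    have hνuniv : ν Set.univ = ENNReal.ofReal (2 * δ) := by
      rw [hν, Measure.restrict_apply_univ, Real.volume_Ioo]; ring_nf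
    have hu2 : Integrable (fun x => 2 * u x ^ 2) volume := huL2.integrable_sq.const_mul 2
    have hbound : ∀ x ξ : ℝ, ENNReal.ofReal ((u (x + ξ) - u x) ^ 2)
        ≤ ENNReal.ofReal (2 * u (x + ξ) ^ 2) + ENNReal.ofReal (2 * u x ^ 2) := by
      intro x ξ
      rw [← ENNReal.ofReal_add (by positivity) (by positivity)]
      exact ENNReal.ofReal_le_ofReal (by nlinarith [sq_nonneg (u (x+ξ) + u x)])
    have hI2 : ∫⁻ x : ℝ, ENNReal.ofReal (2 * u x ^ 2) < ⊤ := hu2.lintegral_lt_top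
    calc ∫⁻ x : ℝ, ∫⁻ ξ, ENNReal.ofReal ((u (x + ξ) - u x) ^ 2) ∂ν
        ≤ ∫⁻ x : ℝ, ∫⁻ ξ, (ENNReal.ofReal (2 * u (x + ξ) ^ 2) + ENNReal.ofReal (2 * u x ^ 2)) ∂ν := by
          refine lintegral_mono fun x => lintegral_mono fun ξ => hbound x ξ
      _ = (∫⁻ x : ℝ, ∫⁻ ξ, ENNReal.ofReal (2 * u (x + ξ) ^ 2) ∂ν)
          + ∫⁻ x : ℝ, ∫⁻ ξ, ENNReal.ofReal (2 * u x ^ 2) ∂ν := by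
          rw [← lintegral_add_left]
          · congr 1; ext x
            rw [lintegral_add_left]
            exact ((humeas.comp (measurable_const.add measurable_id)).pow_const 2).const_mul 2 |>.ennreal_ofReal
          · exact Measurable.lintegral_prod_right
              (f := fun x ξ => ENNReal.ofReal (2 * u (x + ξ) ^ 2))
              ((((humeas.comp (measurable_fst.add measurable_snd)).pow_const 2).const_mul 2).ennreal_ofReal)
      _ < ⊤ := by
          apply ENNReal.add_lt_top.2
          constructor
          · rw [lintegral_lintegral_swap]
            · have heq : ∀ ξ : ℝ, ∫⁻ x : ℝ, ENNReal.ofReal (2 * u (x + ξ) ^ 2)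
                  = ∫⁻ x : ℝ, ENNReal.ofReal (2 * u x ^ 2) := fun ξ =>
                lintegral_add_right_eq_self (fun y => ENNReal.ofReal (2 * u y ^ 2)) ξ
              simp_rw [heq]
              rw [lintegral_const, hνuniv]
              exact ENNReal.mul_lt_top hI2 ENNReal.ofReal_lt_top
            · exact ((((humeas.comp (measurable_fst.add measurable_snd)).pow_const 2).const_mul 2).ennreal_ofReal).aemeasurable
          · have hcst : ∀ x : ℝ, ∫⁻ ξ, ENNReal.ofReal (2 * u x ^ 2) ∂ν
                = ENNReal.ofReal (2 * u x ^ 2) * ENNReal.ofReal (2 * δ) := by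
              intro x; rw [lintegral_const, hνuniv]
            simp_rw [hcst]
            rw [lintegral_mul_const]
            · exact ENNReal.mul_lt_top hI2 ENNReal.ofReal_lt_top
            · exact ((humeas.pow_const 2).const_mul 2).ennreal_ofReal
  -- the Bochner energy equals the lintegral
  have hFrep : ∀ x : ℝ, (∫ ξ in Set.Ioo (-δ) δ, (u (x + ξ) - u x) ^ 2)
      = (∫⁻ ξ, ENNReal.ofReal ((u (x + ξ) - u x) ^ 2) ∂ν).toReal := by
    intro x
    rw [integral_eq_lintegral_of_nonneg_ae]
    · exact Filter.Eventually.of_forall fun ξ => sq_nonneg _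
    · exact (((humeas.comp (measurable_const.add measurable_id)).sub
        measurable_const).pow_const 2).aestronglyMeasurable
  have hL0 : ∫⁻ x : ℝ, ∫⁻ ξ, ENNReal.ofReal ((u (x + ξ) - u x) ^ 2) ∂ν = 0 := by
    have hinnerfin : ∀ᵐ x : ℝ, (∫⁻ ξ, ENNReal.ofReal ((u (x + ξ) - u x) ^ 2) ∂ν) < ⊤ :=
      ae_lt_top hinner_meas hfin.ne
    have h1 : (∫ x : ℝ, ∫ ξ in Set.Ioo (-δ) δ, (u (x + ξ) - u x) ^ 2)
        = (∫⁻ x : ℝ, ∫⁻ ξ, ENNReal.ofReal ((u (x + ξ) - u x) ^ 2) ∂ν).toReal := by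
      rw [integral_eq_lintegral_of_nonneg_ae]
      · congr 1
        apply lintegral_congr_ae
        filter_upwards [hinnerfin] with x hx
        rw [hFrep x, ENNReal.ofReal_toReal hx.ne]
      · exact Filter.Eventually.of_forall fun x => by
          simp only [Pi.zero_apply]; rw [hFrep x]; exact ENNReal.toReal_nonneg
      · have heq : (fun x : ℝ => ∫ ξ in Set.Ioo (-δ) δ, (u (x + ξ) - u x) ^ 2)
            = fun x => (∫⁻ ξ, ENNReal.ofReal ((u (x + ξ) - u x) ^ 2) ∂ν).toReal :=
          funext hFrep
        rw [heq]
        exact hinner_meas.ennreal_toReal.aestronglyMeasurable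
    rw [h1] at henergy
    exact (ENNReal.toReal_eq_zero_iff _).1 henergy |>.resolve_right hfin.ne
  -- a.e. x : u(x+ξ) = u x for a.e. ξ ∈ (-δ, δ)
  have hP : ∀ᵐ x : ℝ, ∀ᵐ ξ ∂ν, u (x + ξ) = u x := by
    have := (lintegral_eq_zero_iff hinner_meas).1 hL0
    filter_upwards [this] with x hx
    have := (lintegral_eq_zero_iff (μ := ν)
      (((humeas.comp (measurable_const.add measurable_id)).sub measurable_const).pow_const 2).ennreal_ofReal).1 hx
    filter_upwards [this] with ξ hξ
    have h0 : (u (x + ξ) - u x) ^ 2 ≤ 0 := ENNReal.ofReal_eq_zero.1 hξ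
    have := le_antisymm h0 (sq_nonneg _)
    have := pow_eq_zero_iff (n := 2) (by norm_num) |>.1 this
    linarith [sub_eq_zero.1 this]
  -- chain argument: u vanishes a.e. to the right of b - n δ/2
  have key : ∀ n : ℕ, ∀ᵐ x : ℝ, b - n * (δ / 2) < x → u x = 0 := by
    intro n
    induction n with
    | zero =>
      refine Filter.Eventually.of_forall fun x hx => ?_
      by_contra h
      have := hsupp (Function.mem_support.2 h)
      simp only [Set.mem_Icc] at this
      simp at hx
      linarith [this.2]
    | succ n ih =>
      -- translated version of ih, valid for every x
      have htrans : ∀ x : ℝ, ∀ᵐ ξ : ℝ, b - n * (δ / 2) < x + ξ → u (x + ξ) = 0 := by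
        intro x
        have hmap : ∀ᵐ ξ : ℝ ∂(Measure.map (fun ξ : ℝ => x + ξ) volume),
            b - n * (δ / 2) < ξ → u ξ = 0 := by
          rwa [map_add_left_eq_self volume x]
        exact (MeasureTheory.ae_map_iff
          (measurable_const.add measurable_id).aemeasurable
          (by
            have : MeasurableSet {y : ℝ | b - n * (δ / 2) < y → u y = 0} := by
              have : {y : ℝ | b - n * (δ / 2) < y → u y = 0}
                  = {y : ℝ | b - n * (δ / 2) < y}ᶜ ∪ {y : ℝ | u y = 0} := by
                ext y; simp [imp_iff_not_or]
              rw [this]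
              exact (measurableSet_lt measurable_const measurable_id).compl.union
                (humeas (measurableSet_singleton 0))
            exact this)).1 hmap
      filter_upwards [hP, ih] with x hx hxih
      intro hxgt
      by_cases hcase : b - n * (δ / 2) < x
      · exact hxih hcase
      push_neg at hcase
      set c : ℝ := b - n * (δ / 2) - x with hc
      have hc0 : 0 ≤ c := by simp [hc]; linarith
      have hcδ : c < δ := by
        have : b - (n + 1 : ℕ) * (δ / 2) < x := hxgt
        push_cast at this
        simp only [hc]
        nlinarith
      set S : Set ℝ := Set.Ioo c δ with hS
      have hSsub : S ⊆ Set.Ioo (-δ) δ := by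
        intro ξ hξ
        exact ⟨by linarith [hξ.1, hc0], hξ.2⟩
      have hSpos : volume S ≠ 0 := by
        rw [hS, Real.volume_Ioo]
        simp only [ne_eq, ENNReal.ofReal_eq_zero, not_le]
        linarith
      haveI : (ae (volume.restrict S)).NeBot := by
        rw [ae_neBot]
        intro h
        apply hSpos
        have : volume.restrict S Set.univ = 0 := by rw [h]; simp
        rwa [Measure.restrict_apply_univ] at this
      have h1 : ∀ᵐ ξ ∂volume.restrict S, u (x + ξ) = u x :=
        ae_restrict_of_ae_restrict_of_subset hSsub hx
      have h2 : ∀ᵐ ξ ∂volume.restrict S, (b - n * (δ / 2) < x + ξ → u (x + ξ) = 0) :=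
        ae_restrict_of_ae (htrans x)
      have h3 : ∀ᵐ ξ ∂volume.restrict S, ξ ∈ S :=
        ae_restrict_mem measurableSet_Ioo
      obtain ⟨ξ, ⟨hu_eq, himp⟩, hmem⟩ := ((h1.and h2).and h3).exists
      have hgt : b - n * (δ / 2) < x + ξ := by
        have := hmem.1
        simp only [hc] at this
        linarith
      rw [← hu_eq]
      exact himp hgt
  have hall : ∀ᵐ x : ℝ, ∀ n : ℕ, b - n * (δ / 2) < x → u x = 0 := ae_all_iff.2 key
  filter_upwards [hall] with x hx
  obtain ⟨n, hn⟩ := exists_nat_gt ((b - x) / (δ / 2))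
  have : b - n * (δ / 2) < x := by
    have hδ2 : (0:ℝ) < δ / 2 := by linarith
    rw [div_lt_iff₀ hδ2] at hn
    linarith
  exact hx n this
end
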